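/- Let α, β, γ be positive definite Hermitian forms (metrics) on an n-dimensional complex vector space. Then (Λ_α β)·(Λ_β γ) ≥ Λ_α γ, where Λ_α β denotes the trace of β with respect to α (i.e. the sum of eigenvalues of β relative to α). -/

import Mathlib

open scoped ComplexOrder
open Matrix
open scoped MatrixOrder

lemma trace_conjTranspose_mul_self_re {n : ℕ} (P : Matrix (Fin n) (Fin n) ℂ) :
    ((Pᴴ * P).trace).re = ∑ i, ∑ j, Complex.normSq (P j i) := by
  simp only [Matrix.trace, Matrix.diag, Matrix.mul_apply, Matrix.conjTranspose_apply,
    Complex.re_sum]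
  congr 1; ext i; congr 1; ext j
  rw [Complex.star_def, mul_comm, Complex.mul_conj]
  simp

/-- Cauchy–Schwarz / Frobenius: Tr(MᴴM NᴴN) ≤ Tr(MᴴM) Tr(NᴴN). -/
lemma trace_mul_le {n : ℕ} (M N : Matrix (Fin n) (Fin n) ℂ) :
    ((Mᴴ * M * (Nᴴ * N)).trace).re ≤ ((Mᴴ * M).trace).re * ((Nᴴ * N).trace).re := by
  have h1 : (Mᴴ * M * (Nᴴ * N)).trace = (((N * Mᴴ)ᴴ * (N * Mᴴ)).trace) := by
    rw [Matrix.conjTranspose_mul, Matrix.conjTranspose_conjTranspose]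
    rw [show Mᴴ * M * (Nᴴ * N) = Mᴴ * (M * Nᴴ * N) by noncomm_ring,
        Matrix.trace_mul_comm, show M * Nᴴ * N * Mᴴ = M * Nᴴ * (N * Mᴴ) by noncomm_ring]
  rw [h1, trace_conjTranspose_mul_self_re, trace_conjTranspose_mul_self_re,
    trace_conjTranspose_mul_self_re]
  have key : ∀ i j : Fin n, Complex.normSq ((N * Mᴴ) j i) ≤
      (∑ k, Complex.normSq (M i k)) * (∑ k, Complex.normSq (N j k)) := by
    intro i j
    have habs : ‖(N * Mᴴ) j i‖ ≤ ∑ k, ‖M i k‖ * ‖N j k‖ := by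
      rw [Matrix.mul_apply]
      refine (norm_sum_le _ _).trans ?_
      apply Finset.sum_le_sum
      intro k _
      simp [Matrix.conjTranspose_apply, mul_comm]
    have hsq : Complex.normSq ((N * Mᴴ) j i) ≤
        (∑ k, ‖M i k‖ * ‖N j k‖) ^ 2 := by
      rw [← Complex.sq_norm]
      exact pow_le_pow_left₀ (norm_nonneg _) habs 2
    refine hsq.trans ?_
    have := Finset.sum_mul_sq_le_sq_mul_sq Finset.univ
      (fun k => ‖M i k‖) (fun k => ‖N j k‖)
    refine this.trans (le_of_eq ?_)
    simp [Complex.sq_norm]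
  calc ∑ i, ∑ j, Complex.normSq ((N * Mᴴ) j i)
      ≤ ∑ i, ∑ j, (∑ k, Complex.normSq (M i k)) * (∑ k, Complex.normSq (N j k)) := by
        apply Finset.sum_le_sum; intro i _
        apply Finset.sum_le_sum; intro j _
        exact key i j
    _ = (∑ i, ∑ k, Complex.normSq (M i k)) * (∑ j, ∑ k, Complex.normSq (N j k)) := by
        rw [Finset.sum_mul]
        congr 1; ext i
        rw [← Finset.mul_sum]
    _ = (∑ i, ∑ j, Complex.normSq (M j i)) * (∑ i, ∑ j, Complex.normSq (N j i)) := by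
        rw [Finset.sum_comm (f := fun i k => Complex.normSq (M i k)),
            Finset.sum_comm (f := fun i k => Complex.normSq (N i k))]

/-- Trace product inequality: for positive definite Hermitian matrices A, B, C,
    Tr(A⁻¹B) · Tr(B⁻¹C) ≥ Tr(A⁻¹C). -/
theorem trace_prod_ineq {n : ℕ} {A B C : Matrix (Fin n) (Fin n) ℂ}
    (hA : A.PosDef) (hB : B.PosDef) (hC : C.PosDef) :
    ((A⁻¹ * B).trace).re * ((B⁻¹ * C).trace).re ≥ ((A⁻¹ * C).trace).re := by
  set S : Matrix (Fin n) (Fin n) ℂ := CFC.sqrt B with hSdef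
  have hSherm : S.IsHermitian := (CFC.sqrt_nonneg B).posSemidef.isHermitian
  have hSS : S * S = B := CFC.sqrt_mul_sqrt_self B hB.posSemidef.nonneg
  have hSdet : IsUnit S.det := by
    have : S.det * S.det = B.det := by rw [← Matrix.det_mul, hSS]
    have hBdet : B.det ≠ 0 := hB.det_pos.ne'
    exact isUnit_iff_ne_zero.mpr (fun h => hBdet (by rw [← this, h, mul_zero]))
  have hSinv : S * S⁻¹ = 1 := Matrix.mul_nonsing_inv S hSdet
  have hSinv' : S⁻¹ * S = 1 := Matrix.nonsing_inv_mul S hSdet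
  -- X := S A⁻¹ S, Y := S⁻¹ C S⁻¹ are PSD
  have hX : (S * A⁻¹ * S).PosSemidef := by
    have := (hA.inv.posSemidef).mul_mul_conjTranspose_same S
    rwa [hSherm.eq] at this
  have hY : (S⁻¹ * C * S⁻¹).PosSemidef := by
    have := (hC.posSemidef).mul_mul_conjTranspose_same S⁻¹
    rwa [hSherm.inv.eq] at this
  obtain ⟨M, hM⟩ := CStarAlgebra.nonneg_iff_eq_star_mul_self.mp hX.nonneg
  obtain ⟨N, hN⟩ := CStarAlgebra.nonneg_iff_eq_star_mul_self.mp hY.nonneg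
  have e1 : (A⁻¹ * B).trace = (S * A⁻¹ * S).trace := by
    rw [← hSS, ← Matrix.mul_assoc, Matrix.trace_mul_cycle]
  have e2 : (B⁻¹ * C).trace = (S⁻¹ * C * S⁻¹).trace := by
    rw [← hSS, Matrix.mul_inv_rev]
    exact (Matrix.trace_mul_cycle S⁻¹ C S⁻¹).symm
  have e3 : (A⁻¹ * C).trace = ((S * A⁻¹ * S) * (S⁻¹ * C * S⁻¹)).trace := by
    have : (S * A⁻¹ * S) * (S⁻¹ * C * S⁻¹) = S * (A⁻¹ * C) * S⁻¹ := by
      calc (S * A⁻¹ * S) * (S⁻¹ * C * S⁻¹)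
          = S * A⁻¹ * (S * S⁻¹) * C * S⁻¹ := by noncomm_ring
        _ = S * (A⁻¹ * C) * S⁻¹ := by rw [hSinv]; noncomm_ring
    rw [this, Matrix.trace_mul_cycle, ← Matrix.mul_assoc, hSinv', Matrix.one_mul]
  rw [e1, e2, e3, hM, hN]
  exact trace_mul_le M N
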